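/- If (μ₁,...,μ_r) is an AT system on a closed interval Γ for the multi-index n (i.e., dμ_j = w_j dμ for a common reference measure μ ∈ M(Γ) and the functions w₁, xw₁, ..., x^{n₁−1}w₁, ..., w_r, ..., x^{n_r−1}w_r form a Chebyshev system on Γ), then the index n is normal: the block moment matrix H_n[μ] has nonzero determinant. -/

import Mathlib

open Polynomial MeasureTheory

/-- The (topological) support of a measure on `ℝ`. -/
def msupp (μ : Measure ℝ) : Set ℝ := {x | ∀ U ∈ nhds x, μ U ≠ 0}

/-- `(u 0, ..., u (N-1))` is a Chebyshev system on `Γ`: for every strictly increasing tuple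
of points of `Γ` the determinant `det (u i (x j))` is nonzero, with constant sign. -/
def IsChebyshev (N : ℕ) (Γ : Set ℝ) (u : Fin N → ℝ → ℝ) : Prop :=
  ∀ x y : Fin N → ℝ, StrictMono x → StrictMono y →
    (∀ i, x i ∈ Γ) → (∀ i, y i ∈ Γ) →
      0 < (Matrix.of fun i j => u i (x j)).det * (Matrix.of fun i j => u i (y j)).det

section AuxLemmas

lemma pi_integrable_prod {N : ℕ} {μ : Measure ℝ} [SigmaFinite μ] (f : Fin N → ℝ → ℝ)
    (hf : ∀ i, Integrable (f i) μ) :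
    Integrable (fun x : Fin N → ℝ => ∏ i, f i (x i)) (Measure.pi fun _ => μ) := by
  letI : MeasureSpace ℝ := ⟨μ⟩
  letI : SigmaFinite (volume : Measure ℝ) := ‹_›
  exact Integrable.fintype_prod hf

lemma pi_integral_prod {N : ℕ} (μ : Measure ℝ) [SigmaFinite μ] (f : Fin N → ℝ → ℝ) :
    ∫ x : Fin N → ℝ, ∏ i, f i (x i) ∂(Measure.pi fun _ => μ) = ∏ i, ∫ x, f i x ∂μ := by
  letI : MeasureSpace ℝ := ⟨μ⟩
  letI : SigmaFinite (volume : Measure ℝ) := ‹_›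
  exact integral_fintype_prod_eq_prod f

lemma perm_apply_eq {N : ℕ} (τ : Equiv.Perm (Fin N)) (x : Fin N → ℝ) :
    (MeasurableEquiv.piCongrLeft (fun _ : Fin N => ℝ) τ.symm) x = fun i => x (τ i) := by
  funext i
  have h := Equiv.piCongrLeft_apply_apply (fun _ : Fin N => ℝ) τ.symm x (τ i)
  simpa [MeasurableEquiv.coe_piCongrLeft] using h

lemma pi_integral_comp_perm {N : ℕ} (μ : Measure ℝ) [SigmaFinite μ] (τ : Equiv.Perm (Fin N))
    (g : (Fin N → ℝ) → ℝ) :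
    ∫ x : Fin N → ℝ, g (fun i => x (τ i)) ∂(Measure.pi fun _ => μ)
      = ∫ x, g x ∂(Measure.pi fun _ => μ) := by
  have h := (measurePreserving_piCongrLeft (fun _ : Fin N => μ) τ.symm).integral_comp' g
  simp_rw [perm_apply_eq τ] at h
  exact h

lemma pi_integrable_comp_perm {N : ℕ} {μ : Measure ℝ} [SigmaFinite μ] (τ : Equiv.Perm (Fin N))
    {g : (Fin N → ℝ) → ℝ} (hg : Integrable g (Measure.pi fun _ => μ)) :
    Integrable (fun x : Fin N → ℝ => g (fun i => x (τ i))) (Measure.pi fun _ => μ) := by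
  have h := ((measurePreserving_piCongrLeft (fun _ : Fin N => μ) τ.symm).integrable_comp_emb
    (MeasurableEquiv.measurableEmbedding _)).mpr hg
  have he : (g ∘ (MeasurableEquiv.piCongrLeft (fun _ : Fin N => ℝ) τ.symm))
      = fun x : Fin N → ℝ => g (fun i => x (τ i)) := by
    funext x; simp [Function.comp, perm_apply_eq τ]
  rwa [he] at h

lemma det_expand {N : ℕ} (v : Fin N → ℝ → ℝ) (x : Fin N → ℝ) :
    (Matrix.of fun i j => v i (x j)).det
      = ∑ σ : Equiv.Perm (Fin N), ((Equiv.Perm.sign σ : ℤ) : ℝ) * ∏ i, v i (x (σ i)) := by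
  rw [← Matrix.det_transpose, Matrix.det_apply']
  rfl

lemma vdm_expand {N : ℕ} (x : Fin N → ℝ) :
    (Matrix.of fun j k : Fin N => x j ^ (k : ℕ)).det
      = ∑ σ : Equiv.Perm (Fin N), ((Equiv.Perm.sign σ : ℤ) : ℝ) * ∏ i, x i ^ ((σ i : ℕ)) := by
  rw [Matrix.det_apply']
  refine Fintype.sum_equiv (Equiv.inv (Equiv.Perm (Fin N))) _ _ (fun σ => ?_)
  have hp : ∏ i, (x (σ i)) ^ ((i : Fin N) : ℕ) = ∏ i, x i ^ ((σ⁻¹ i : ℕ)) := by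
    rw [← Equiv.prod_comp σ (fun p => x p ^ ((σ⁻¹ p : ℕ)))]
    simp
  simp only [Equiv.inv_apply, Matrix.of_apply, Equiv.Perm.sign_inv]
  rw [hp]

/-- The "un-symmetrized" Andréief integrand. -/
def gAux {N : ℕ} (v : Fin N → ℝ → ℝ) (x : Fin N → ℝ) : ℝ :=
  (∏ i, v i (x i)) * (Matrix.of fun j k : Fin N => x j ^ (k : ℕ)).det

/-- The symmetrized Andréief integrand. -/
def GAux {N : ℕ} (v : Fin N → ℝ → ℝ) (x : Fin N → ℝ) : ℝ :=
  (Matrix.of fun i j => v i (x j)).det * (Matrix.of fun j k : Fin N => x j ^ (k : ℕ)).det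

lemma gAux_expand {N : ℕ} (v : Fin N → ℝ → ℝ) (x : Fin N → ℝ) :
    gAux v x = ∑ σ : Equiv.Perm (Fin N),
      ((Equiv.Perm.sign σ : ℤ) : ℝ) * ∏ i, (v i (x i) * (x i) ^ ((σ i : ℕ))) := by
  unfold gAux
  rw [vdm_expand, Finset.mul_sum]
  refine Finset.sum_congr rfl fun σ _ => ?_
  rw [Finset.prod_mul_distrib]
  ring

lemma gAux_integrable {N : ℕ} {μ : Measure ℝ} [IsFiniteMeasure μ] {v : Fin N → ℝ → ℝ}
    (hv : ∀ i, ∀ k : ℕ, Integrable (fun x => v i x * x ^ k) μ) :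
    Integrable (gAux v) (Measure.pi fun _ => μ) := by
  have h : gAux v = fun x : Fin N → ℝ => ∑ σ : Equiv.Perm (Fin N),
      ((Equiv.Perm.sign σ : ℤ) : ℝ) * ∏ i, (v i (x i) * (x i) ^ ((σ i : ℕ))) :=
    funext (gAux_expand v)
  rw [h]
  refine integrable_finset_sum _ fun σ _ => ?_
  exact (pi_integrable_prod (fun i t => v i t * t ^ ((σ i : ℕ))) (fun i => hv i (σ i))).const_mul _

lemma GAux_eq_sum {N : ℕ} (v : Fin N → ℝ → ℝ) (x : Fin N → ℝ) :
    (∑ τ : Equiv.Perm (Fin N), gAux v (fun i => x (τ i))) = GAux v x := by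
  calc ∑ τ : Equiv.Perm (Fin N), gAux v (fun i => x (τ i))
      = ∑ τ : Equiv.Perm (Fin N), (((Equiv.Perm.sign τ : ℤ) : ℝ) * ∏ i, v i (x (τ i)))
          * (Matrix.of fun j k : Fin N => x j ^ (k : ℕ)).det := by
        refine Finset.sum_congr rfl fun τ _ => ?_
        show (∏ i, v i (x (τ i))) * (Matrix.of fun j k : Fin N => x (τ j) ^ (k : ℕ)).det = _
        have h1 : (Matrix.of fun j k : Fin N => x (τ j) ^ (k : ℕ))
            = (Matrix.of fun j k : Fin N => x j ^ (k : ℕ)).submatrix τ id := rfl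
        rw [h1, Matrix.det_permute]
        ring
    _ = (∑ τ : Equiv.Perm (Fin N), ((Equiv.Perm.sign τ : ℤ) : ℝ) * ∏ i, v i (x (τ i)))
          * (Matrix.of fun j k : Fin N => x j ^ (k : ℕ)).det := by rw [Finset.sum_mul]
    _ = GAux v x := by rw [← det_expand]; rfl

lemma GAux_integrable {N : ℕ} {μ : Measure ℝ} [IsFiniteMeasure μ] {v : Fin N → ℝ → ℝ}
    (hv : ∀ i, ∀ k : ℕ, Integrable (fun x => v i x * x ^ k) μ) :
    Integrable (GAux v) (Measure.pi fun _ => μ) := by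
  have h : GAux v = fun x : Fin N → ℝ => ∑ τ : Equiv.Perm (Fin N), gAux v (fun i => x (τ i)) :=
    funext fun x => (GAux_eq_sum v x).symm
  rw [h]
  exact integrable_finset_sum _ fun τ _ => pi_integrable_comp_perm τ (gAux_integrable hv)

lemma det_eq_integral_gAux {N : ℕ} (μ : Measure ℝ) [IsFiniteMeasure μ] (v : Fin N → ℝ → ℝ)
    (hv : ∀ i, ∀ k : ℕ, Integrable (fun x => v i x * x ^ k) μ) :
    (Matrix.of fun i k : Fin N => ∫ x, v i x * x ^ (k : ℕ) ∂μ).det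
      = ∫ x : Fin N → ℝ, gAux v x ∂(Measure.pi fun _ => μ) := by
  have hA : (Matrix.of fun i k : Fin N => ∫ x, v i x * x ^ (k : ℕ) ∂μ).det
      = ∑ σ : Equiv.Perm (Fin N), ((Equiv.Perm.sign σ : ℤ) : ℝ)
          * ∏ i, ∫ x, v i x * x ^ ((σ i : ℕ)) ∂μ := by
    rw [← Matrix.det_transpose, Matrix.det_apply']
    rfl
  rw [hA]
  have hfub : ∀ σ : Equiv.Perm (Fin N), (∏ i, ∫ x, v i x * x ^ ((σ i : ℕ)) ∂μ)
      = ∫ x : Fin N → ℝ, ∏ i, (v i (x i) * (x i) ^ ((σ i : ℕ))) ∂(Measure.pi fun _ => μ) :=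
    fun σ => (pi_integral_prod μ (fun i t => v i t * t ^ ((σ i : ℕ)))).symm
  simp_rw [hfub, ← integral_const_mul]
  rw [← integral_finset_sum]
  · exact integral_congr_ae (Filter.Eventually.of_forall fun x => (gAux_expand v x).symm)
  · intro σ _
    exact (pi_integrable_prod (fun i t => v i t * t ^ ((σ i : ℕ)))
      (fun i => hv i (σ i))).const_mul _

lemma andreief {N : ℕ} (μ : Measure ℝ) [IsFiniteMeasure μ] (v : Fin N → ℝ → ℝ)
    (hv : ∀ i, ∀ k : ℕ, Integrable (fun x => v i x * x ^ k) μ) :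
    (N.factorial : ℝ) * (Matrix.of fun i k : Fin N => ∫ x, v i x * x ^ (k : ℕ) ∂μ).det
      = ∫ x : Fin N → ℝ, GAux v x ∂(Measure.pi fun _ => μ) := by
  have h1 : ∫ x : Fin N → ℝ, GAux v x ∂(Measure.pi fun _ => μ)
      = ∑ τ : Equiv.Perm (Fin N), ∫ x : Fin N → ℝ, gAux v (fun i => x (τ i))
          ∂(Measure.pi fun _ => μ) := by
    rw [← integral_finset_sum]
    · exact integral_congr_ae (Filter.Eventually.of_forall fun x => (GAux_eq_sum v x).symm)
    · exact fun τ _ => pi_integrable_comp_perm τ (gAux_integrable hv)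
  rw [h1]
  have h2 : ∀ τ : Equiv.Perm (Fin N), ∫ x : Fin N → ℝ, gAux v (fun i => x (τ i))
      ∂(Measure.pi fun _ => μ) = (Matrix.of fun i k : Fin N => ∫ x, v i x * x ^ (k : ℕ) ∂μ).det :=
    fun τ => (pi_integral_comp_perm μ τ (gAux v)).trans (det_eq_integral_gAux μ v hv).symm
  simp_rw [h2, Finset.sum_const, Finset.card_univ, Fintype.card_perm, Fintype.card_fin,
    nsmul_eq_mul]

lemma GAux_zero {N : ℕ} (v : Fin N → ℝ → ℝ) {x : Fin N → ℝ}
    (hx : ¬ Function.Injective x) : GAux v x = 0 := by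
  rw [Function.not_injective_iff] at hx
  obtain ⟨i, j, hij, hne⟩ := hx
  have h0 : (Matrix.of fun j k : Fin N => x j ^ (k : ℕ)).det = 0 := by
    refine Matrix.det_zero_of_row_eq hne ?_
    funext k
    simp [hij]
  unfold GAux
  rw [h0, mul_zero]

lemma GAux_pos {N : ℕ} {Γ : Set ℝ} {v : Fin N → ℝ → ℝ}
    (hchev : IsChebyshev N Γ v) {y₀ : Fin N → ℝ} (hy₀ : StrictMono y₀)
    (hy₀Γ : ∀ i, y₀ i ∈ Γ) {x : Fin N → ℝ} (hxΓ : ∀ i, x i ∈ Γ)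
    (hinj : Function.Injective x) :
    0 < (Matrix.of fun i j => v i (y₀ j)).det * GAux v x := by
  set τ := Tuple.sort x with hτ
  have hmono : Monotone (x ∘ τ) := Tuple.monotone_sort x
  have hs : StrictMono (x ∘ τ) := hmono.strictMono_of_injective (hinj.comp τ.injective)
  have hch := hchev (x ∘ τ) y₀ hs hy₀ (fun i => hxΓ _) hy₀Γ
  have h1 : (Matrix.of fun i j => v i ((x ∘ τ) j))
      = (Matrix.of fun i j => v i (x j)).submatrix id τ := rfl
  have h2 : (Matrix.of fun j k : Fin N => (x ∘ τ) j ^ (k : ℕ))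
      = (Matrix.of fun j k : Fin N => x j ^ (k : ℕ)).submatrix τ id := rfl
  have hVdpos : 0 < (Matrix.of fun j k : Fin N => (x ∘ τ) j ^ (k : ℕ)).det := by
    have hvdm : (Matrix.of fun j k : Fin N => (x ∘ τ) j ^ (k : ℕ))
        = Matrix.vandermonde (x ∘ τ) := rfl
    rw [hvdm, Matrix.det_vandermonde]
    refine Finset.prod_pos fun i _ => Finset.prod_pos fun j hj => ?_
    have hij : i < j := Finset.mem_Ioi.mp hj
    linarith [hs hij]
  set s : ℝ := ((Equiv.Perm.sign τ : ℤ) : ℝ) with hsdef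
  have hsign : s * s = 1 := by
    rcases Int.units_eq_one_or (Equiv.Perm.sign τ) with h | h <;> rw [hsdef, h] <;> norm_num
  set D0 : ℝ := (Matrix.of fun i j => v i (y₀ j)).det with hD0
  set Dx : ℝ := (Matrix.of fun i j => v i (x j)).det with hDx
  set Vx : ℝ := (Matrix.of fun j k : Fin N => x j ^ (k : ℕ)).det with hVx
  have hch' : 0 < (s * Dx) * D0 := by
    rw [h1, Matrix.det_permute'] at hch
    exact hch
  have hVd' : 0 < s * Vx := by
    rw [h2, Matrix.det_permute] at hVdpos
    exact hVdpos
  have key2 : 0 < ((s * Dx) * D0) * (s * Vx) := mul_pos hch' hVd'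
  have heq : ((s * Dx) * D0) * (s * Vx) = (s * s) * (D0 * (Dx * Vx)) := by ring
  rw [heq, hsign, one_mul] at key2
  exact key2

lemma compl_null {μ : Measure ℝ} {Γ : Set ℝ} (hsupp : msupp μ ⊆ Γ) : μ Γᶜ = 0 := by
  refine measure_null_of_locally_null _ fun x hx => ?_
  have hxn : x ∉ msupp μ := fun h => hx (hsupp h)
  simp only [msupp, Set.mem_setOf_eq, not_forall] at hxn
  obtain ⟨U, hU, hU0⟩ := hxn
  exact ⟨U, mem_nhdsWithin_of_mem_nhds hU, not_not.mp hU0⟩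

lemma pi_ae_mem {N : ℕ} {μ : Measure ℝ} [IsFiniteMeasure μ] {Γ : Set ℝ}
    (hnull : μ Γᶜ = 0) :
    (Measure.pi fun _ : Fin N => μ) {x : Fin N → ℝ | ¬ ∀ i, x i ∈ Γ} = 0 := by
  have hsub : {x : Fin N → ℝ | ¬ ∀ i, x i ∈ Γ} ⊆ ⋃ i, {x : Fin N → ℝ | x i ∈ Γᶜ} := by
    intro x hx
    obtain ⟨i, hi⟩ := not_forall.mp hx
    exact Set.mem_iUnion.mpr ⟨i, hi⟩
  refine measure_mono_null hsub (measure_iUnion_null fun i => ?_)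
  have hset : {x : Fin N → ℝ | x i ∈ Γᶜ}
      = Set.univ.pi (Function.update (fun _ : Fin N => (Set.univ : Set ℝ)) i Γᶜ) := by
    ext x
    simp only [Set.mem_setOf_eq, Set.mem_univ_pi, Function.update_apply]
    constructor
    · intro h j
      by_cases hj : j = i
      · subst hj; simpa using h
      · simp [hj]
    · intro h
      have := h i
      simpa using this
  rw [hset, Measure.pi_pi]
  refine Finset.prod_eq_zero (Finset.mem_univ i) ?_
  simp [hnull]

lemma exists_delta {N : ℕ} {y : Fin N → ℝ} (hy : Function.Injective y) :
    ∃ δ : ℝ, 0 < δ ∧ ∀ i j : Fin N, i ≠ j → 2 * δ ≤ |y i - y j| := by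
  classical
  set T : Finset ℝ :=
    Finset.image (fun p : Fin N × Fin N => |y p.1 - y p.2|) Finset.univ.offDiag with hT
  by_cases hne : T.Nonempty
  · refine ⟨T.min' hne / 2, ?_, ?_⟩
    · have hmem := T.min'_mem hne
      obtain ⟨p, hp, hval⟩ := Finset.mem_image.mp hmem
      have hpne : p.1 ≠ p.2 := (Finset.mem_offDiag.mp hp).2.2
      have hpos : 0 < |y p.1 - y p.2| := abs_pos.mpr (sub_ne_zero.mpr fun h => hpne (hy h))
      have h0 : 0 < T.min' hne := hval ▸ hpos
      linarith
    · intro i j hij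
      have hmem : |y i - y j| ∈ T := by
        rw [hT]
        exact Finset.mem_image.mpr ⟨(i, j),
          Finset.mem_offDiag.mpr ⟨Finset.mem_univ _, Finset.mem_univ _, hij⟩, rfl⟩
      have := T.min'_le _ hmem
      linarith
  · refine ⟨1, one_pos, fun i j hij => absurd ?_ hne⟩
    exact ⟨_, Finset.mem_image.mpr ⟨(i, j),
      Finset.mem_offDiag.mpr ⟨Finset.mem_univ _, Finset.mem_univ _, hij⟩, rfl⟩⟩

end AuxLemmas

/-- AT systems are normal: if `dμ_j = w_j dμ` with `μ` a finite positive measure with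
infinite support in the closed interval `Γ`, all moments finite, and the functions
`x^i w_j` (`0 ≤ i ≤ n_j - 1`, `1 ≤ j ≤ r`) form a Chebyshev system on `Γ`, then the block
moment matrix `H_n[μ]` has nonzero determinant. -/
theorem stmt11 (r : ℕ) (μ : Measure ℝ) [IsFiniteMeasure μ]
    (Γ : Set ℝ) (hclosed : IsClosed Γ) (hconn : Γ.OrdConnected)
    (hsupp : msupp μ ⊆ Γ) (hinf : (msupp μ).Infinite)
    (w : Fin r → ℝ → ℝ) (hw : ∀ j, ContinuousOn (w j) Γ)
    (hint : ∀ j, ∀ k : ℕ, Integrable (fun x : ℝ => x ^ k * w j x) μ)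
    (n : Fin r → ℕ) (e : ((j : Fin r) × Fin (n j)) ≃ Fin (∑ j, n j))
    (hAT : IsChebyshev (∑ j, n j) Γ
      (fun i x => x ^ (((e.symm i).2 : ℕ)) * w (e.symm i).1 x)) :
    (Matrix.of fun p q : (j : Fin r) × Fin (n j) =>
        ∫ x : ℝ, x ^ ((p.2 : ℕ) + (e q : ℕ)) * w p.1 x ∂μ).det ≠ 0 := by
  classical
  set v : Fin (∑ j, n j) → ℝ → ℝ :=
    fun i x => x ^ (((e.symm i).2 : ℕ)) * w (e.symm i).1 x with hvdef
  have hcheb : IsChebyshev (∑ j, n j) Γ v := hAT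
  have hv : ∀ i, ∀ k : ℕ, Integrable (fun x : ℝ => v i x * x ^ k) μ := by
    intro i k
    have h := hint (e.symm i).1 (((e.symm i).2 : ℕ) + k)
    have heq : (fun x : ℝ => v i x * x ^ k)
        = fun x : ℝ => x ^ (((e.symm i).2 : ℕ) + k) * w (e.symm i).1 x := by
      funext t
      simp only [hvdef]
      ring
    rw [heq]
    exact h
  have hM : (Matrix.of fun p q : (j : Fin r) × Fin (n j) =>
      ∫ x : ℝ, x ^ ((p.2 : ℕ) + (e q : ℕ)) * w p.1 x ∂μ)
      = (Matrix.of fun i k : Fin (∑ j, n j) => ∫ x, v i x * x ^ (k : ℕ) ∂μ).submatrix e e := by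
    ext p q
    show (∫ x : ℝ, x ^ ((p.2 : ℕ) + (e q : ℕ)) * w p.1 x ∂μ)
      = ∫ x, v (e p) x * x ^ ((e q : ℕ)) ∂μ
    have heq : (fun x : ℝ => x ^ ((p.2 : ℕ) + (e q : ℕ)) * w p.1 x)
        = fun x : ℝ => v (e p) x * x ^ ((e q : ℕ)) := by
      funext t
      simp only [hvdef]
      rw [Equiv.symm_apply_apply]
      ring
    rw [heq]
  rw [hM, Matrix.det_submatrix_equiv_self]
  intro hdet0
  -- pick a strictly monotone tuple of support points
  obtain ⟨sfin, hsfin, hcard⟩ := hinf.exists_subset_card_eq (∑ j, n j)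
  set y₀ : Fin (∑ j, n j) → ℝ := fun i => (sfin.orderIsoOfFin hcard i : ℝ) with hy₀def
  have hy₀mono : StrictMono y₀ := fun a b hab => by
    exact_mod_cast (sfin.orderIsoOfFin hcard).strictMono hab
  have hy₀supp : ∀ i, y₀ i ∈ msupp μ := fun i => hsfin (sfin.orderIsoOfFin hcard i).2
  have hy₀Γ : ∀ i, y₀ i ∈ Γ := fun i => hsupp (hy₀supp i)
  set D0 : ℝ := (Matrix.of fun i j => v i (y₀ j)).det with hD0
  set π := Measure.pi (fun _ : Fin (∑ j, n j) => μ) with hπ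
  have hGint : Integrable (GAux v) π := GAux_integrable hv
  have hand := andreief μ v hv
  rw [hdet0, mul_zero] at hand
  set H : (Fin (∑ j, n j) → ℝ) → ℝ := fun x => D0 * GAux v x with hHdef
  have hHint : Integrable H π := hGint.const_mul _
  have hΓnull : μ Γᶜ = 0 := compl_null hsupp
  have hpinull : π {x : Fin (∑ j, n j) → ℝ | ¬ ∀ i, x i ∈ Γ} = 0 := pi_ae_mem hΓnull
  have haeΓ : ∀ᵐ x ∂π, ∀ i, x i ∈ Γ := by
    rw [MeasureTheory.ae_iff]
    exact hpinull
  have hHnonneg : 0 ≤ᵐ[π] H := by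
    filter_upwards [haeΓ] with x hx
    by_cases hinj : Function.Injective x
    · exact le_of_lt (GAux_pos hcheb hy₀mono hy₀Γ hx hinj)
    · simp [hHdef, GAux_zero v hinj]
  have hintH : ∫ x, H x ∂π = 0 := by
    simp only [hHdef]
    rw [integral_const_mul, ← hand, mul_zero]
  have hH0 : H =ᵐ[π] 0 := (integral_eq_zero_iff_of_nonneg_ae hHnonneg hHint).mp hintH
  have hHnull : π {x | H x ≠ 0} = 0 := by
    have h' := hH0
    rw [Filter.EventuallyEq, MeasureTheory.ae_iff] at h'
    simpa using h'
  have hy₀inj : Function.Injective y₀ := hy₀mono.injective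
  obtain ⟨δ, hδpos, hδsep⟩ := exists_delta hy₀inj
  set B : Set (Fin (∑ j, n j) → ℝ) := Set.univ.pi fun i => Metric.ball (y₀ i) δ with hBdef
  have hBpos : π B ≠ 0 := by
    rw [hBdef, hπ, Measure.pi_pi]
    rw [Finset.prod_ne_zero_iff]
    intro i _
    exact hy₀supp i _ (Metric.ball_mem_nhds _ hδpos)
  refine hBpos (measure_mono_null ?_ (measure_union_null hpinull hHnull))
  intro x hxB
  by_cases hxΓ : ∀ i, x i ∈ Γ
  · refine Or.inr ?_
    have hinj : Function.Injective x := by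
      intro i j hij
      by_contra hne
      have h2δ := hδsep i j hne
      have hi : |x i - y₀ i| < δ := by
        have := hxB i (Set.mem_univ i)
        simpa [Real.dist_eq] using this
      have hj : |x j - y₀ j| < δ := by
        have := hxB j (Set.mem_univ j)
        simpa [Real.dist_eq] using this
      have htri : |y₀ i - y₀ j| ≤ |y₀ i - x i| + |x j - y₀ j| := by
        calc |y₀ i - y₀ j| ≤ |y₀ i - x i| + |x i - y₀ j| := abs_sub_le _ _ _
          _ = |y₀ i - x i| + |x j - y₀ j| := by rw [hij]
      rw [abs_sub_comm (y₀ i) (x i)] at htri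
      linarith
    exact (GAux_pos hcheb hy₀mono hy₀Γ hxΓ hinj).ne'
  · exact Or.inl hxΓ
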